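/- Let d ≥ 1, let G = (V, E) be a finite graph, let H = (V, F) be a maximal d-sparse subgraph of G, and let X₁, X₂, …, X_m be the vertex sets of the d-critical components of H. Then 𝒳 = {X₁, …, X_m} is a (d−1)-thin cover of G, and every (d−1)-hinge of 𝒳 is closed in H (it induces a complete subgraph of H). -/
import Mathlib


open Finset
open scoped Classical

variable {α : Type*} [DecidableEq α]

/-- The set of edges of `E` with both endpoints in `X`. -/
noncomputable def inducedEdges (E : Finset (Sym2 α)) (X : Finset α) : Finset (Sym2 α) :=
  E.filter fun e => ∀ v ∈ e, v ∈ X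

/-- `i_G(X)`: the number of edges of `E` with both endpoints in `X`. -/
noncomputable def iG (E : Finset (Sym2 α)) (X : Finset α) : ℕ :=
  (inducedEdges E X).card

/-- `E` is a valid edge set on the vertex set `V`: edges are loopless and join vertices of `V`. -/
def ValidOn (V : Finset α) (E : Finset (Sym2 α)) : Prop :=
  ∀ e ∈ E, ¬ e.IsDiag ∧ ∀ v ∈ e, v ∈ V

/-- The graph `(V, E)` is `d`-sparse: every `X ⊆ V` with `|X| ≥ d` satisfies
`i(X) ≤ d|X| - (d+1 choose 2)`. -/
noncomputable def Sparse (d : ℕ) (V : Finset α) (E : Finset (Sym2 α)) : Prop :=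
  ∀ X ⊆ V, d ≤ X.card → iG E X + Nat.choose (d + 1) 2 ≤ d * X.card

/-- `(U, F)` is a subgraph of `(V, E)`. -/
def IsSubgraph (V : Finset α) (E : Finset (Sym2 α)) (U : Finset α) (F : Finset (Sym2 α)) :
    Prop :=
  U ⊆ V ∧ F ⊆ E ∧ ∀ e ∈ F, ∀ v ∈ e, v ∈ U

/-- The graph `(U, F)` is `d`-critical: either `|U| = 2` and `|F| = 1`, or `|U| ≥ d + 2` and
`|F| = d|U| - (d+1 choose 2)`. -/
def Critical (d : ℕ) (U : Finset α) (F : Finset (Sym2 α)) : Prop :=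
  (U.card = 2 ∧ F.card = 1) ∨
  (d + 2 ≤ U.card ∧ F.card + Nat.choose (d + 1) 2 = d * U.card)

/-- `(U, F)` is a `d`-critical subgraph of `(V, E)`. -/
def CritSubgraph (d : ℕ) (V : Finset α) (E : Finset (Sym2 α)) (U : Finset α)
    (F : Finset (Sym2 α)) : Prop :=
  IsSubgraph V E U F ∧ Critical d U F

/-- `(U, F)` is a `d`-critical component of `(V, E)`: a `d`-critical subgraph not properly
contained in any other `d`-critical subgraph. -/
def CritComponent (d : ℕ) (V : Finset α) (E : Finset (Sym2 α)) (U : Finset α)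
    (F : Finset (Sym2 α)) : Prop :=
  CritSubgraph d V E U F ∧
  ∀ U' F', CritSubgraph d V E U' F' → U ⊆ U' → F ⊆ F' → U = U' ∧ F = F'

/-- The `d`-critical cover of `(V, E)`: the family of vertex sets of its `d`-critical
components. -/
noncomputable def critCover (d : ℕ) (V : Finset α) (E : Finset (Sym2 α)) :
    Finset (Finset α) :=
  V.powerset.filter fun U => ∃ F, CritComponent d V E U F

/-- `d_𝒳(W)`: the number of members of the family `𝒳` containing `W`. -/
def degX (𝒳 : Finset (Finset α)) (W : Finset α) : ℕ :=
  (𝒳.filter fun X => W ⊆ X).card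

/-- `Θ_k(𝒳)`: the set of `k`-hinges of `𝒳`, i.e. `k`-element subsets of `V` lying in at least
two members of `𝒳`.  (For `k = 0` this is `{∅}` exactly when `|𝒳| ≥ 2`.) -/
noncomputable def theta (V : Finset α) (𝒳 : Finset (Finset α)) (k : ℕ) :
    Finset (Finset α) :=
  V.powerset.filter fun W => W.card = k ∧ 2 ≤ degX 𝒳 W

/-- `𝒳` is a cover of `(V, E)`: every member has at least two vertices and every edge is
induced by some member. -/
def IsCover (E : Finset (Sym2 α)) (𝒳 : Finset (Finset α)) : Prop :=
  (∀ X ∈ 𝒳, 2 ≤ X.card) ∧ ∀ e ∈ E, ∃ X ∈ 𝒳, ∀ v ∈ e, v ∈ X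

/-- `𝒳` is `t`-thin: any two distinct members intersect in at most `t` vertices. -/
def Thin (t : ℕ) (𝒳 : Finset (Finset α)) : Prop :=
  ∀ X ∈ 𝒳, ∀ Y ∈ 𝒳, X ≠ Y → (X ∩ Y).card ≤ t

/-- `(V, F)` is a maximal `d`-sparse (spanning) subgraph of `(V, E)`. -/
noncomputable def MaxSparse (d : ℕ) (V : Finset α) (E F : Finset (Sym2 α)) : Prop :=
  F ⊆ E ∧ Sparse d V F ∧ ∀ e ∈ E, e ∉ F → ¬ Sparse d V (insert e F)


set_option linter.unusedSectionVars false

lemma mem_inducedEdges {E : Finset (Sym2 α)} {X : Finset α} {e : Sym2 α} :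
    e ∈ inducedEdges E X ↔ e ∈ E ∧ ∀ v ∈ e, v ∈ X := Finset.mem_filter

lemma inducedEdges_mono {E : Finset (Sym2 α)} {X Y : Finset α} (h : X ⊆ Y) :
    inducedEdges E X ⊆ inducedEdges E Y := by
  intro e he; rw [mem_inducedEdges] at *
  exact ⟨he.1, fun v hv => h (he.2 v hv)⟩

lemma inducedEdges_inter (E : Finset (Sym2 α)) (X Y : Finset α) :
    inducedEdges E X ∩ inducedEdges E Y = inducedEdges E (X ∩ Y) := by
  ext e; simp only [mem_inter, mem_inducedEdges]
  constructor
  · rintro ⟨⟨h1, h2⟩, ⟨-, h3⟩⟩; exact ⟨h1, fun v hv => ⟨h2 v hv, h3 v hv⟩⟩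
  · rintro ⟨h1, h2⟩; exact ⟨⟨h1, fun v hv => (h2 v hv).1⟩,
      ⟨h1, fun v hv => (h2 v hv).2⟩⟩

lemma iG_supermodular (E : Finset (Sym2 α)) (X Y : Finset α) :
    iG E X + iG E Y ≤ iG E (X ∪ Y) + iG E (X ∩ Y) := by
  have h1 : inducedEdges E X ∪ inducedEdges E Y ⊆ inducedEdges E (X ∪ Y) :=
    union_subset (inducedEdges_mono subset_union_left) (inducedEdges_mono subset_union_right)
  have h2 := card_union_add_card_inter (inducedEdges E X) (inducedEdges E Y)
  rw [inducedEdges_inter] at h2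
  have := card_le_card h1
  unfold iG; omega

noncomputable def pairsOf (W : Finset α) : Finset (Sym2 α) :=
  W.sym2.filter fun e => ¬ e.IsDiag

lemma mk_mem_pairsOf {W : Finset α} {u v : α} :
    s(u, v) ∈ pairsOf W ↔ (u ∈ W ∧ v ∈ W) ∧ u ≠ v := by
  simp [pairsOf, Finset.mk_mem_sym2_iff, Sym2.mk_isDiag_iff]

lemma mem_pairsOf_of {W : Finset α} {e : Sym2 α} (h1 : ¬ e.IsDiag) (h2 : ∀ v ∈ e, v ∈ W) :
    e ∈ pairsOf W := by
  simp only [pairsOf, mem_filter, Finset.mem_sym2_iff]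
  exact ⟨h2, h1⟩

lemma card_pairsOf (W : Finset α) : (pairsOf W).card = W.card.choose 2 := by
  have hdiag : W.sym2.filter (fun e => e.IsDiag) = W.image Sym2.diag := by
    ext e
    induction e using Sym2.ind with
    | _ x y =>
      simp only [mem_filter, Finset.mk_mem_sym2_iff, Sym2.mk_isDiag_iff, mem_image]
      constructor
      · rintro ⟨⟨hx, -⟩, rfl⟩; exact ⟨x, hx, rfl⟩
      · rintro ⟨a, ha, h⟩
        rw [Sym2.diag, Sym2.eq_iff] at h
        rcases h with ⟨rfl, rfl⟩ | ⟨rfl, rfl⟩ <;> exact ⟨⟨ha, ha⟩, rfl⟩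
  have h1 := Finset.card_filter_add_card_filter_not
    (s := W.sym2) (p := fun e => Sym2.IsDiag e)
  have h2 : (W.image Sym2.diag).card = W.card := card_image_of_injective _ Sym2.diag_injective
  have h3 := Finset.card_sym2 W
  have h4 : (W.card + 1).choose 2 = W.card.choose 2 + W.card := by
    rw [Nat.choose_succ_succ']; simp [Nat.choose_one_right]; omega
  rw [hdiag] at h1
  unfold pairsOf
  omega

lemma two_mul_choose_two (n : ℕ) : 2 * n.choose 2 = n * (n - 1) := by
  induction n with
  | zero => rfl
  | succ n ih =>
    rw [Nat.choose_succ_succ, Nat.choose_one_right, Nat.mul_add, ih]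
    cases n with
    | zero => rfl
    | succ m => simp only [Nat.succ_sub_one]; ring

lemma two_mul_choose_two' (n : ℕ) : 2 * (n + 1).choose 2 = (n + 1) * n := by
  rw [two_mul_choose_two]; simp

lemma choose_arith {d n : ℕ} (h1 : d ≤ n) (h2 : n ≤ d + 1) :
    d * n = n.choose 2 + (d + 1).choose 2 := by
  have e1 := two_mul_choose_two n
  have e2 := two_mul_choose_two' d
  rcases (by omega : n = d ∨ n = d + 1) with rfl | rfl
  · have : 2 * (n * n) = n * (n - 1) + (n + 1) * n := by
      cases n with
      | zero => rfl
      | succ m => simp only [Nat.succ_sub_one]; ring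
    omega
  · have e3 := two_mul_choose_two' (d + 1)
    have : 2 * (d * (d + 1)) = (d + 1) * d + (d + 1) * d := by ring
    omega

lemma choose_identity (d : ℕ) (hd : 1 ≤ d) :
    (d - 1).choose 2 + (d + 1).choose 2 = d * (d - 1) + 1 := by
  obtain ⟨m, rfl⟩ : ∃ m, d = m + 1 := ⟨d - 1, by omega⟩
  have e1 := two_mul_choose_two m
  have e2 := two_mul_choose_two' (m + 1)
  simp only [Nat.add_sub_cancel] at *
  have : 2 * ((m+1) * m + 1) = m * (m-1) + (m+1+1)*(m+1) := by
    cases m with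
    | zero => rfl
    | succ k => simp only [Nat.succ_sub_one]; ring
  omega

lemma sym2_eq_of {e : Sym2 α} {u v : α} (hnd : ¬ e.IsDiag) (huv : u ≠ v)
    (h : ∀ w ∈ e, w ∈ ({u, v} : Finset α)) : e = s(u, v) := by
  induction e using Sym2.ind with
  | _ a b =>
    rw [Sym2.mk_isDiag_iff] at hnd
    have ha := h a (by simp); have hb := h b (by simp)
    simp only [mem_insert, mem_singleton] at ha hb
    rw [Sym2.eq_iff]
    rcases ha with rfl | rfl <;> rcases hb with rfl | rfl
    · exact absurd rfl hnd
    · exact Or.inl ⟨rfl, rfl⟩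
    · exact Or.inr ⟨rfl, rfl⟩
    · exact absurd rfl hnd

lemma exists_comp {d : ℕ} {V : Finset α} {F : Finset (Sym2 α)} {U : Finset α}
    {F' : Finset (Sym2 α)} (h : CritSubgraph d V F U F') :
    ∃ U' F'', CritComponent d V F U' F'' ∧ U ⊆ U' ∧ F' ⊆ F'' := by
  classical
  set S := (V.powerset ×ˢ F.powerset).filter
    (fun p => CritSubgraph d V F p.1 p.2 ∧ U ⊆ p.1 ∧ F' ⊆ p.2) with hS
  have hne : S.Nonempty := ⟨(U, F'), by
    simp only [hS, mem_filter, mem_product, mem_powerset]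
    exact ⟨⟨h.1.1, h.1.2.1⟩, h, subset_rfl, subset_rfl⟩⟩
  obtain ⟨p, hp, hmaxp⟩ := S.exists_max_image (fun p => p.1.card + p.2.card) hne
  simp only [hS, mem_filter, mem_product, mem_powerset] at hp
  obtain ⟨⟨hpV, hpF⟩, hcrit, hU, hF⟩ := hp
  refine ⟨p.1, p.2, ⟨hcrit, ?_⟩, hU, hF⟩
  intro U2 F2 h2 hU2 hF2
  have hmem : (U2, F2) ∈ S := by
    simp only [hS, mem_filter, mem_product, mem_powerset]
    exact ⟨⟨h2.1.1, h2.1.2.1⟩, h2, hU.trans hU2, hF.trans hF2⟩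
  have hle := hmaxp _ hmem
  simp only at hle
  have h1 := card_le_card hU2
  have h2' := card_le_card hF2
  exact ⟨eq_of_subset_of_card_le hU2 (by omega),
    eq_of_subset_of_card_le hF2 (by omega)⟩

lemma comp_edges {d : ℕ} {V : Finset α} {F : Finset (Sym2 α)} {X : Finset α}
    {FX : Finset (Sym2 α)} (hF : ∀ e ∈ F, ¬ e.IsDiag) (hsp : Sparse d V F)
    (hc : CritComponent d V F X FX) : FX = inducedEdges F X := by
  have hsub : FX ⊆ inducedEdges F X := fun e he =>
    mem_inducedEdges.2 ⟨hc.1.1.2.1 he, hc.1.1.2.2 e he⟩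
  rcases hc.1.2 with ⟨hX2, hF1⟩ | ⟨hXd, hFt⟩
  · have hp : inducedEdges F X ⊆ pairsOf X := fun e he =>
      mem_pairsOf_of (hF e (mem_inducedEdges.1 he).1) (mem_inducedEdges.1 he).2
    have hcard := card_le_card hp
    rw [card_pairsOf, hX2] at hcard
    have h22 : Nat.choose 2 2 = 1 := rfl
    exact eq_of_subset_of_card_le hsub (by omega)
  · have hs := hsp X hc.1.1.1 (by omega)
    unfold iG at hs
    exact eq_of_subset_of_card_le hsub (by omega)

lemma comp_tight {d : ℕ} {V : Finset α} {F : Finset (Sym2 α)} {X : Finset α}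
    {FX : Finset (Sym2 α)} (hd : 1 ≤ d) (hF : ∀ e ∈ F, ¬ e.IsDiag) (hsp : Sparse d V F)
    (hc : CritComponent d V F X FX) (hxd : d ≤ X.card) :
    iG F X + Nat.choose (d + 1) 2 = d * X.card := by
  have he := comp_edges hF hsp hc
  rcases hc.1.2 with ⟨hX2, hF1⟩ | ⟨-, hFt⟩
  · have hiG : iG F X = 1 := by rw [iG, ← he, hF1]
    have hd2 : d ≤ 2 := by omega
    rw [hiG, hX2]
    interval_cases d <;> rfl
  · rw [iG, ← he]; exact hFt

lemma comp_not_subset {d : ℕ} {V : Finset α} {F : Finset (Sym2 α)} {X Y : Finset α}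
    {FX FY : Finset (Sym2 α)} (hF : ∀ e ∈ F, ¬ e.IsDiag) (hsp : Sparse d V F)
    (hcx : CritComponent d V F X FX) (hcy : CritComponent d V F Y FY)
    (hne : X ≠ Y) : ¬ X ⊆ Y := by
  intro hsub
  have hFY := comp_edges hF hsp hcy
  have hFXY : FX ⊆ FY := by
    rw [hFY]
    exact fun e he => inducedEdges_mono hsub
      (mem_inducedEdges.2 ⟨hcx.1.1.2.1 he, hcx.1.1.2.2 e he⟩)
  exact hne (hcx.2 Y FY hcy.1 hsub hFXY).1

lemma mem_critCover {d : ℕ} {V : Finset α} {F : Finset (Sym2 α)} {X : Finset α} :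
    X ∈ critCover d V F ↔ X ⊆ V ∧ ∃ FX, CritComponent d V F X FX := by
  simp [critCover, mem_filter, mem_powerset]

/-- If `H = (V, F)` is a maximal `d`-sparse subgraph of `G = (V, E)`, then the
family of vertex sets of the `d`-critical components of `H` is a `(d-1)`-thin cover of `G`
and every `(d-1)`-hinge of this cover induces a complete subgraph of `H`. -/
theorem stmt2 (d : ℕ) (hd : 1 ≤ d) (V : Finset α) (E F : Finset (Sym2 α))
    (hval : ValidOn V E) (hmax : MaxSparse d V E F)
    (𝒳 : Finset (Finset α)) (h𝒳 : 𝒳 = critCover d V F) :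
    IsCover E 𝒳 ∧ Thin (d - 1) 𝒳 ∧
      ∀ W ∈ theta V 𝒳 (d - 1), ∀ u ∈ W, ∀ v ∈ W, u ≠ v → s(u, v) ∈ F := by
  obtain ⟨hFE, hsp, hmaxF⟩ := hmax
  have hFval : ∀ e ∈ F, ¬ e.IsDiag := fun e he => (hval e (hFE he)).1
  have hFV : ∀ e ∈ F, ∀ v ∈ e, v ∈ V := fun e he => (hval e (hFE he)).2
  subst h𝒳
  -- helper: an edge of F is covered
  have hcovF : ∀ u v : α, u ≠ v → s(u, v) ∈ F →
      ∃ X ∈ critCover d V F, u ∈ X ∧ v ∈ X := by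
    intro u v huv he
    have hu : u ∈ V := hFV _ he u (by simp)
    have hv : v ∈ V := hFV _ he v (by simp)
    have hcs : CritSubgraph d V F {u, v} {s(u, v)} := by
      refine ⟨⟨?_, ?_, ?_⟩, Or.inl ⟨?_, rfl⟩⟩
      · intro w hw; simp only [mem_insert, mem_singleton] at hw
        rcases hw with rfl | rfl <;> assumption
      · simpa using he
      · intro e' he' w hw
        simp only [mem_singleton] at he'; subst he'
        rcases Sym2.mem_iff.1 hw with rfl | rfl <;> simp
      · rw [card_insert_of_notMem (by simpa using huv), card_singleton]
    obtain ⟨X, FX, hcomp, hUX, -⟩ := exists_comp hcs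
    exact ⟨X, mem_critCover.2 ⟨hcomp.1.1.1, FX, hcomp⟩,
      hUX (by simp), hUX (by simp)⟩
  -- thinness
  have hthin : Thin (d - 1) (critCover d V F) := by
    intro X hX Y hY hne
    by_contra hcard
    push_neg at hcard
    have hdi : d ≤ (X ∩ Y).card := by omega
    obtain ⟨-, FX, hcx⟩ := mem_critCover.1 hX
    obtain ⟨-, FY, hcy⟩ := mem_critCover.1 hY
    have hXV := hcx.1.1.1
    have hYV := hcy.1.1.1
    have hdx : d ≤ X.card := le_trans hdi (card_le_card inter_subset_left)
    have hdy : d ≤ Y.card := le_trans hdi (card_le_card inter_subset_right)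
    have htx := comp_tight hd hFval hsp hcx hdx
    have hty := comp_tight hd hFval hsp hcy hdy
    have hsup := iG_supermodular F X Y
    have hsint := hsp (X ∩ Y) (inter_subset_left.trans hXV) hdi
    have hZV : X ∪ Y ⊆ V := union_subset hXV hYV
    have hsZ := hsp (X ∪ Y) hZV (le_trans hdx (card_le_card subset_union_left))
    have hcards := card_union_add_card_inter X Y
    have hmul : d * (X ∪ Y).card + d * (X ∩ Y).card = d * X.card + d * Y.card := by
      rw [← Nat.mul_add, hcards, Nat.mul_add]
    have hZtight : iG F (X ∪ Y) + Nat.choose (d + 1) 2 = d * (X ∪ Y).card := by omega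
    have hnsub := comp_not_subset hFval hsp hcx hcy hne
    have hnsub' := comp_not_subset hFval hsp hcy hcx hne.symm
    obtain ⟨a, haX, haY⟩ := not_subset.1 hnsub
    obtain ⟨b, hbY, hbX⟩ := not_subset.1 hnsub'
    have hZcard : d + 2 ≤ (X ∪ Y).card := by
      have hsubins : insert a (insert b (X ∩ Y)) ⊆ X ∪ Y := by
        intro w hw
        simp only [mem_insert, mem_inter, mem_union] at hw ⊢
        rcases hw with rfl | rfl | ⟨h1, -⟩ <;> tauto
      have hbni : b ∉ X ∩ Y := by simp [hbX]
      have hani : a ∉ insert b (X ∩ Y) := by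
        simp only [mem_insert, mem_inter]
        rintro (rfl | ⟨-, h⟩)
        · exact hbX haX
        · exact haY h
      have hc1 := card_le_card hsubins
      rw [card_insert_of_notMem hani, card_insert_of_notMem hbni] at hc1
      omega
    have hcs : CritSubgraph d V F (X ∪ Y) (inducedEdges F (X ∪ Y)) :=
      ⟨⟨hZV, filter_subset _ _, fun e he => (mem_inducedEdges.1 he).2⟩,
        Or.inr ⟨hZcard, hZtight⟩⟩
    have hFXsub : FX ⊆ inducedEdges F (X ∪ Y) := fun e he =>
      mem_inducedEdges.2 ⟨hcx.1.1.2.1 he,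
        fun w hw => mem_union_left _ (hcx.1.1.2.2 e he w hw)⟩
    have hXeq := (hcx.2 _ _ hcs subset_union_left hFXsub).1
    exact hnsub' (by rw [hXeq]; exact subset_union_right)
  -- cover
  have hcov : IsCover E (critCover d V F) := by
    constructor
    · intro X hX
      obtain ⟨-, FX, hcx⟩ := mem_critCover.1 hX
      rcases hcx.1.2 with ⟨h2, -⟩ | ⟨hge, -⟩ <;> omega
    · intro e heE
      induction e using Sym2.ind with
      | _ u v =>
        have huv : u ≠ v := by
          have := (hval _ heE).1
          rwa [Sym2.mk_isDiag_iff] at this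
        have hmemuv : ∀ X : Finset α, u ∈ X → v ∈ X → ∀ w ∈ s(u, v), w ∈ X := by
          intro X h1 h2 w hw
          rcases Sym2.mem_iff.1 hw with rfl | rfl <;> assumption
        by_cases heF : s(u, v) ∈ F
        · obtain ⟨X, hX, hu, hv⟩ := hcovF u v huv heF
          exact ⟨X, hX, hmemuv X hu hv⟩
        · have hns := hmaxF _ heE heF
          unfold Sparse at hns
          push_neg at hns
          obtain ⟨X, hXV, hXd, hlt⟩ := hns
          have hsX := hsp X hXV hXd
          have hsubind : inducedEdges F X ⊆ inducedEdges (insert s(u, v) F) X :=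
            fun e' he' => mem_inducedEdges.2
              ⟨mem_insert_of_mem (mem_inducedEdges.1 he').1, (mem_inducedEdges.1 he').2⟩
          have hlt' : (inducedEdges F X).card < (inducedEdges (insert s(u, v) F) X).card := by
            unfold iG at hsX hlt; omega
          have hss : inducedEdges F X ⊂ inducedEdges (insert s(u, v) F) X :=
            Finset.ssubset_iff_subset_ne.2 ⟨hsubind, fun h => by rw [h] at hlt'; omega⟩
          obtain ⟨e', he', hne'⟩ := exists_of_ssubset hss
          have heq : e' = s(u, v) := by
            rcases mem_inducedEdges.1 he' with ⟨hmemins, hend⟩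
            rcases mem_insert.1 hmemins with h | hF'
            · exact h
            · exact absurd (mem_inducedEdges.2 ⟨hF', hend⟩) hne'
          have hend : ∀ w ∈ s(u, v), w ∈ X := heq ▸ (mem_inducedEdges.1 he').2
          have huX : u ∈ X := hend u (by simp)
          have hvX : v ∈ X := hend v (by simp)
          have htight : iG F X + Nat.choose (d + 1) 2 = d * X.card := by
            have hins : inducedEdges (insert s(u, v) F) X ⊆
                insert s(u, v) (inducedEdges F X) := by
              intro e'' he''
              rcases mem_inducedEdges.1 he'' with ⟨h1, h2⟩
              rcases mem_insert.1 h1 with rfl | h1'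
              · exact mem_insert_self _ _
              · exact mem_insert_of_mem (mem_inducedEdges.2 ⟨h1', h2⟩)
            have hc1 := card_le_card hins
            have hc2 := card_insert_le s(u, v) (inducedEdges F X)
            unfold iG at hsX hlt ⊢
            omega
          by_cases hbig : d + 2 ≤ X.card
          · have hcs : CritSubgraph d V F X (inducedEdges F X) :=
              ⟨⟨hXV, filter_subset _ _, fun e'' he'' => (mem_inducedEdges.1 he'').2⟩,
                Or.inr ⟨hbig, htight⟩⟩
            obtain ⟨U', F'', hcomp, hUX, -⟩ := exists_comp hcs
            exact ⟨U', mem_critCover.2 ⟨hcomp.1.1.1, F'', hcomp⟩,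
              hmemuv U' (hUX huX) (hUX hvX)⟩
          · have hXle : X.card ≤ d + 1 := by omega
            have harith := choose_arith hXd hXle
            have hiGX : iG F X = X.card.choose 2 := by omega
            have hsubp : inducedEdges F X ⊆ pairsOf X := fun e'' he'' =>
              mem_pairsOf_of (hFval _ (mem_inducedEdges.1 he'').1)
                (mem_inducedEdges.1 he'').2
            have hpeq : inducedEdges F X = pairsOf X :=
              eq_of_subset_of_card_le hsubp (by rw [card_pairsOf, ← hiGX]; exact le_rfl)
            have : s(u, v) ∈ inducedEdges F X := by
              rw [hpeq]; exact mk_mem_pairsOf.2 ⟨⟨huX, hvX⟩, huv⟩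
            exact absurd (mem_inducedEdges.1 this).1 heF
  refine ⟨hcov, hthin, ?_⟩
  -- hinges are closed
  intro W hW u hu v hv huv
  simp only [theta, mem_filter, mem_powerset] at hW
  obtain ⟨hWV, hWcard, hdeg⟩ := hW
  have hW2 : 2 ≤ W.card := by
    have : 1 < W.card := Finset.one_lt_card.2 ⟨u, hu, v, hv, huv⟩
    omega
  have hd3 : 3 ≤ d := by omega
  obtain ⟨X, hXf, Y, hYf, hne⟩ := Finset.one_lt_card.1 (by exact hdeg)
  obtain ⟨hX𝒳, hWX⟩ := mem_filter.1 hXf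
  obtain ⟨hY𝒳, hWY⟩ := mem_filter.1 hYf
  obtain ⟨-, FX, hcx⟩ := mem_critCover.1 hX𝒳
  obtain ⟨-, FY, hcy⟩ := mem_critCover.1 hY𝒳
  have hWXY : W ⊆ X ∩ Y := subset_inter hWX hWY
  have hthinXY := hthin X hX𝒳 Y hY𝒳 hne
  have hXYW : X ∩ Y = W := (eq_of_subset_of_card_le hWXY (by omega)).symm
  have hsmall : ∀ Z FZ, CritComponent d V F Z FZ → W ⊆ Z → Z.card = 2 →
      s(u, v) ∈ F := by
    intro Z FZ hcz hWZ h2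
    have huvZ : ({u, v} : Finset α) ⊆ Z := by
      intro w hw
      simp only [mem_insert, mem_singleton] at hw
      rcases hw with rfl | rfl
      exacts [hWZ hu, hWZ hv]
    have hcuv : ({u, v} : Finset α).card = 2 := by
      rw [card_insert_of_notMem (by simpa using huv), card_singleton]
    have hZuv : ({u, v} : Finset α) = Z :=
      eq_of_subset_of_card_le huvZ (by omega)
    rcases hcz.1.2 with ⟨-, hc1⟩ | ⟨hge, -⟩
    · obtain ⟨e0, he0⟩ := card_eq_one.1 hc1
      have he0F : e0 ∈ F := hcz.1.1.2.1 (he0 ▸ mem_singleton_self e0)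
      have hend := hcz.1.1.2.2 e0 (he0 ▸ mem_singleton_self e0)
      have he0eq : e0 = s(u, v) :=
        sym2_eq_of (hFval e0 he0F) huv (fun w hw => hZuv ▸ hend w hw)
      exact he0eq ▸ he0F
    · omega
  by_cases hX2 : X.card = 2
  · exact hsmall X FX hcx hWX hX2
  by_cases hY2 : Y.card = 2
  · exact hsmall Y FY hcy hWY hY2
  have hXbig : d + 2 ≤ X.card := by
    rcases hcx.1.2 with ⟨h, -⟩ | ⟨h, -⟩
    · exact absurd h hX2
    · exact h
  have hYbig : d + 2 ≤ Y.card := by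
    rcases hcy.1.2 with ⟨h, -⟩ | ⟨h, -⟩
    · exact absurd h hY2
    · exact h
  have htx := comp_tight hd hFval hsp hcx (by omega)
  have hty := comp_tight hd hFval hsp hcy (by omega)
  have hXV := hcx.1.1.1
  have hYV := hcy.1.1.1
  have hZV : X ∪ Y ⊆ V := union_subset hXV hYV
  have hdz : d ≤ (X ∪ Y).card :=
    le_trans (by omega : d ≤ X.card) (card_le_card subset_union_left)
  have hsZ := hsp (X ∪ Y) hZV hdz
  have hnsub := comp_not_subset hFval hsp hcx hcy hne
  have hnsub' := comp_not_subset hFval hsp hcy hcx hne.symm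
  have hstrict : iG F (X ∪ Y) + Nat.choose (d + 1) 2 + 1 ≤ d * (X ∪ Y).card := by
    by_contra hcon
    have heq : iG F (X ∪ Y) + Nat.choose (d + 1) 2 = d * (X ∪ Y).card := by omega
    have hZcard : d + 2 ≤ (X ∪ Y).card :=
      le_trans hXbig (card_le_card subset_union_left)
    have hcs : CritSubgraph d V F (X ∪ Y) (inducedEdges F (X ∪ Y)) :=
      ⟨⟨hZV, filter_subset _ _, fun e he => (mem_inducedEdges.1 he).2⟩,
        Or.inr ⟨hZcard, heq⟩⟩
    have hFXsub : FX ⊆ inducedEdges F (X ∪ Y) := fun e he =>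
      mem_inducedEdges.2 ⟨hcx.1.1.2.1 he,
        fun w hw => mem_union_left _ (hcx.1.1.2.2 e he w hw)⟩
    have hXeq := (hcx.2 _ _ hcs subset_union_left hFXsub).1
    exact hnsub' (by rw [hXeq]; exact subset_union_right)
  have hsup := iG_supermodular F X Y
  have hcards := card_union_add_card_inter X Y
  rw [hXYW] at hsup hcards
  have hmul : d * (X ∪ Y).card + d * W.card = d * X.card + d * Y.card := by
    rw [← Nat.mul_add, hcards, Nat.mul_add]
  rw [hWcard] at hmul
  have hid := choose_identity d hd
  by_contra hnotF
  have hsubp : inducedEdges F W ⊆ pairsOf W := fun e'' he'' =>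
    mem_pairsOf_of (hFval _ (mem_inducedEdges.1 he'').1) (mem_inducedEdges.1 he'').2
  have hnotin : s(u, v) ∉ inducedEdges F W := fun h => hnotF (mem_inducedEdges.1 h).1
  have hmiss : insert s(u, v) (inducedEdges F W) ⊆ pairsOf W := by
    intro e he
    rcases mem_insert.1 he with rfl | h
    · exact mk_mem_pairsOf.2 ⟨⟨hu, hv⟩, huv⟩
    · exact hsubp h
  have hles : iG F W + 1 ≤ (pairsOf W).card := by
    have hc1 := card_le_card hmiss
    rw [card_insert_of_notMem hnotin] at hc1
    unfold iG
    omega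
  rw [card_pairsOf, hWcard] at hles
  omega
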